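/- (Projection of (Dom).) Let P_Dom be the polytope of pairs (z,h) ∈ ℝ^{J∪{s,t}} × [0,1]^J with z_s = 0, z ≥ 0, z_t ≤ M, and z_j − z_i ≥ L⁰(i,j) + (L^Δ(i,j) − L⁰(i,j)) h_j for all i ≺ j (h_s = 1, h_t = 0). Then the projection of P_Dom onto h equals { h ∈ [0,1]^J : for every s–t chain C in the transitive closure of G, Σ_{(i,j)∈C, j≠t} (L⁰(i,j) + (L^Δ(i,j) − L⁰(i,j)) h_j) + L⁰(j_C, t) ≤ M }, where j_C is the last vertex of C before t. -/

import Mathlib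

/-- Length of a path (given as a list of vertices) when each arc `(i,j)` has
length `q i` (the duration of its source vertex). -/
def PathLen {V : Type*} (q : V → ℝ) (l : List V) : ℝ := (l.dropLast.map q).sum

/-- `l` is a path from `i` to `j` in the digraph with arc relation `A`. -/
def IsPath {V : Type*} (A : V → V → Prop) (i j : V) (l : List V) : Prop :=
  l ≠ [] ∧ l.Chain' A ∧ l.head? = some i ∧ l.getLast? = some j

/-- Length of a path for arc-indexed weights `w`. -/
def LenW {V : Type*} (w : V → V → ℝ) : List V → ℝ
  | a :: b :: l => w a b + LenW w (b :: l)
  | _ => 0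

/-- `x` is a schedule of the precedence graph `(V, A)` with durations `q` and source `s`. -/
def Sched {V : Type*} (A : V → V → Prop) (s : V) (q x : V → ℝ) : Prop :=
  x s = 0 ∧ (∀ v, 0 ≤ x v) ∧ ∀ i j, A i j → q i ≤ x j - x i

/-- `H` is `x`-anchored for the uncertainty set `Δ`. -/
def XAnchored {V : Type*} (A : V → V → Prop) (s : V) (p : V → ℝ)
    (Δ : Set (V → ℝ)) (x : V → ℝ) (H : Set V) : Prop :=
  ∀ δ ∈ Δ, ∃ y, Sched A s (fun v => p v + δ v) y ∧ ∀ i ∈ H, y i = x i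

/-- `L` is the longest `i`–`j` path length under durations `q`. -/
def IsLongest {V : Type*} (A : V → V → Prop) (q : V → ℝ) (i j : V) (L : ℝ) : Prop :=
  IsGreatest {r | ∃ l, IsPath A i j l ∧ PathLen q l = r} L

/-- `L` is the worst-case longest `i`–`j` path length over the uncertainty set `Δ`. -/
def IsWorst {V : Type*} (A : V → V → Prop) (p : V → ℝ) (Δ : Set (V → ℝ))
    (i j : V) (L : ℝ) : Prop :=
  IsGreatest {r | ∃ δ ∈ Δ, ∃ l, IsPath A i j l ∧ PathLen (fun v => p v + δ v) l = r} L

section Aux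
variable {V : Type*}

lemma pathLen_nonneg {q : V → ℝ} (hq : ∀ v, 0 ≤ q v) (l : List V) : 0 ≤ PathLen q l := by
  refine List.sum_nonneg ?_
  intro x hx
  obtain ⟨a, _, rfl⟩ := List.mem_map.1 hx
  exact hq a

lemma pathLen_mono {q q' : V → ℝ} (hq : ∀ v, q v ≤ q' v) (l : List V) :
    PathLen q l ≤ PathLen q' l :=
  List.sum_le_sum (by simpa using fun a _ => hq a)

lemma LenW_cons_cons {w : V → V → ℝ} (a b : V) (l : List V) :
    LenW w (a :: b :: l) = w a b + LenW w (b :: l) := rfl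

lemma lenW_nonneg {w : V → V → ℝ} {r : V → V → Prop}
    (hw : ∀ a b, r a b → 0 ≤ w a b) :
    ∀ l : List V, l.Chain' r → 0 ≤ LenW w l
  | [] => fun _ => le_refl 0
  | [_] => fun _ => le_refl 0
  | a :: b :: l => fun hc => by
      rw [List.Chain', List.isChain_cons_cons] at hc
      have h1 := lenW_nonneg hw (b :: l) hc.2
      have h2 := hw a b hc.1
      rw [LenW_cons_cons]; linarith

lemma lenW_concat {w : V → V → ℝ} :
    ∀ (l : List V) (i j : V), l.getLast? = some i →
      LenW w (l ++ [j]) = LenW w l + w i j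
  | [], i, j, hl => by simp at hl
  | [a], i, j, hl => by
      simp only [List.getLast?_singleton, Option.some.injEq] at hl
      subst hl
      show w a j + 0 = 0 + w a j
      ring
  | a :: b :: l, i, j, hl => by
      rw [List.getLast?_cons_cons] at hl
      have ih := lenW_concat (w := w) (b :: l) i j hl
      show w a b + LenW w ((b :: l) ++ [j]) = (w a b + LenW w (b :: l)) + w i j
      rw [ih]; ring

lemma lenW_le_sub {w : V → V → ℝ} {r : V → V → Prop} {z : V → ℝ}
    (hz : ∀ a b, r a b → w a b ≤ z b - z a) :
    ∀ (l : List V) (a b : V), l.Chain' r → l.head? = some a → l.getLast? = some b →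
      LenW w l ≤ z b - z a
  | [], a, b, _, ha, _ => by simp at ha
  | [x], a, b, _, ha, hb => by
      simp only [List.head?_cons, Option.some.injEq] at ha
      simp only [List.getLast?_singleton, Option.some.injEq] at hb
      subst ha; subst hb
      show (0:ℝ) ≤ z x - z x
      simp
  | x :: y :: l, a, b, hc, ha, hb => by
      simp only [List.head?_cons, Option.some.injEq] at ha
      subst ha
      rw [List.Chain', List.isChain_cons_cons] at hc
      rw [List.getLast?_cons_cons] at hb
      have ih := lenW_le_sub hz (y :: l) y b hc.2 rfl hb
      have h2 := hz _ _ hc.1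
      rw [LenW_cons_cons]; linarith

lemma isPath_concat {r : V → V → Prop} {s i j : V} {l : List V}
    (hl : IsPath r s i l) (hij : r i j) : IsPath r s j (l ++ [j]) := by
  obtain ⟨hne, hc, hh, hlast⟩ := hl
  refine ⟨by simp, ?_, ?_, List.getLast?_concat (l := l)⟩
  · rw [List.Chain', List.isChain_append]
    refine ⟨hc, List.isChain_singleton j, ?_⟩
    intro x hx y hy
    simp only [List.head?_cons, Option.mem_def, Option.some.injEq] at hy
    rw [hlast] at hx
    simp only [Option.mem_def, Option.some.injEq] at hx
    subst hx; subst hy; exact hij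
  · cases l with
    | nil => exact absurd rfl hne
    | cons a l => simpa using hh
end Aux

/-- projection of (Dom): for fixed `h ∈ [0,1]^J` (with `h t = 0`),
a feasible `z` exists iff every `s`–`t` chain `C` in the transitive closure of `G`
satisfies `Σ_{(i,j)∈C, j≠t} (L⁰(i,j) + (L^Δ(i,j) − L⁰(i,j)) h_j) + L⁰(j_C,t) ≤ M`. -/


theorem dom_projection
    {V : Type*} [Fintype V] [DecidableEq V] (A : V → V → Prop) (s t : V)
    (p : V → ℝ) (hp : ∀ v, 0 ≤ p v) (hps : p s = 0)
    (hacyc : ∀ v, ¬ Relation.TransGen A v v)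
    (hsrc : ∀ v, v ≠ s → Relation.TransGen A s v)
    (hsink : ∀ v, v ≠ t → Relation.TransGen A v t)
    (Δ : Set (V → ℝ)) (hΔne : Δ.Nonempty) (hΔnonneg : ∀ δ ∈ Δ, ∀ v, 0 ≤ δ v)
    (hΔst : ∀ δ ∈ Δ, δ s = 0 ∧ δ t = 0)
    (L0 LΔ : V → V → ℝ)
    (hL0 : ∀ i j, Relation.TransGen A i j → IsLongest A p i j (L0 i j))
    (hLΔ : ∀ i j, Relation.TransGen A i j → IsWorst A p Δ i j (LΔ i j))
    (M : ℝ) (h : V → ℝ) (hh : ∀ v, 0 ≤ h v ∧ h v ≤ 1) (hht : h t = 0) :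
    (∃ z : V → ℝ, z s = 0 ∧ (∀ v, 0 ≤ z v) ∧ z t ≤ M ∧
        ∀ i j, Relation.TransGen A i j →
          L0 i j + (LΔ i j - L0 i j) * h j ≤ z j - z i) ↔
      (∀ C : List V, IsPath (fun a b => Relation.TransGen A a b) s t C →
        LenW (fun i j => if j = t then L0 i t
          else L0 i j + (LΔ i j - L0 i j) * h j) C ≤ M) := by
  classical
  set r : V → V → Prop := fun a b => Relation.TransGen A a b with hrdef
  set w : V → V → ℝ := fun i j => if j = t then L0 i t
      else L0 i j + (LΔ i j - L0 i j) * h j with hwdef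
  have hw_eq : ∀ i j, w i j = L0 i j + (LΔ i j - L0 i j) * h j := by
    intro i j
    by_cases hj : j = t
    · subst hj; simp [hwdef, hht]
    · simp [hwdef, hj]
  have hL0nn : ∀ i j, r i j → 0 ≤ L0 i j := by
    intro i j hij
    obtain ⟨l, hl, hlen⟩ := (hL0 i j hij).1
    rw [← hlen]
    exact pathLen_nonneg hp l
  have hLge : ∀ i j, r i j → L0 i j ≤ LΔ i j := by
    intro i j hij
    obtain ⟨l, hl, hlen⟩ := (hL0 i j hij).1
    obtain ⟨δ, hδ⟩ := hΔne
    have hmem : PathLen (fun v => p v + δ v) l ∈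
        {x | ∃ δ ∈ Δ, ∃ l, IsPath A i j l ∧ PathLen (fun v => p v + δ v) l = x} :=
      ⟨δ, hδ, l, hl, rfl⟩
    have hub := (hLΔ i j hij).2 hmem
    have hmono : PathLen p l ≤ PathLen (fun v => p v + δ v) l :=
      pathLen_mono (fun v => by have := hΔnonneg δ hδ v; linarith) l
    linarith [hlen ▸ hmono]
  have hwnn : ∀ i j, r i j → 0 ≤ w i j := by
    intro i j hij
    rw [hw_eq]
    exact add_nonneg (hL0nn i j hij)
      (mul_nonneg (sub_nonneg.2 (hLge i j hij)) (hh j).1)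
  constructor
  · rintro ⟨z, hzs, hznn, hzt, hcon⟩ C hC
    obtain ⟨hne, hch, hhd, hlt⟩ := hC
    have harc : ∀ a b, r a b → w a b ≤ z b - z a := by
      intro a b hab
      rw [hw_eq]
      exact hcon a b hab
    have := lenW_le_sub harc C s t hch hhd hlt
    rw [hzs] at this
    linarith
  · intro hM
    haveI : IsTrans V r := ⟨fun _ _ _ hab hbc => hab.trans hbc⟩
    have hnodup : ∀ l : List V, l.Chain' r → l.Nodup := by
      intro l hl
      have hpw := List.isChain_iff_pairwise.mp hl
      have hne : ∀ a b : V, r a b → a ≠ b := fun a b hab heq => hacyc a (heq ▸ hab)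
      exact hpw.imp (fun {a b} hab => hne a b hab)
    have hfinp : ∀ v, {l : List V | IsPath r s v l}.Finite := by
      intro v
      refine (List.finite_length_le V (Fintype.card V)).subset ?_
      intro l hl
      exact (hnodup l hl.2.1).length_le_card
    set S : V → Set ℝ := fun v => LenW w '' {l | IsPath r s v l} with hSdef
    have hSfin : ∀ v, (S v).Finite := fun v => (hfinp v).image _
    have hSne : ∀ v, (S v).Nonempty := by
      intro v
      by_cases hv : v = s
      · subst hv
        exact ⟨LenW w [v], [v], ⟨List.cons_ne_nil _ _, List.isChain_singleton v, rfl, rfl⟩, rfl⟩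
      · exact ⟨LenW w [s, v], [s, v],
          ⟨List.cons_ne_nil _ _, List.isChain_pair.mpr (hsrc v hv), rfl, rfl⟩, rfl⟩
    set z : V → ℝ := fun v => sSup (S v) with hzdef
    have hz_mem : ∀ v, z v ∈ S v := fun v => (hSne v).csSup_mem (hSfin v)
    have hz_ub : ∀ v x, x ∈ S v → x ≤ z v := fun v x hx =>
      le_csSup (hSfin v).bddAbove hx
    refine ⟨z, ?_, ?_, ?_, ?_⟩
    · -- z s = 0
      have hS : S s = {0} := by
        ext x
        constructor
        · rintro ⟨l, hl, rfl⟩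
          obtain ⟨hne, hch, hhd, hlt⟩ := hl
          match l, hne with
          | [a], _ =>
            rfl
          | a :: b :: l', _ =>
            exfalso
            simp only [List.head?_cons, Option.some.injEq] at hhd
            have hg : (a :: b :: l').getLast? =
                some ((a :: b :: l').getLast (by simp)) :=
              List.getLast?_eq_getLast _
            rw [hg, Option.some.injEq] at hlt
            have hmem : (a :: b :: l').getLast (by simp) ∈ b :: l' := by
              rw [List.getLast_cons (by simp : b :: l' ≠ [])]
              exact List.getLast_mem _
            have hpw := List.isChain_iff_pairwise.mp hch
            have := (List.pairwise_cons.mp hpw).1 _ hmem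
            rw [hlt, hhd] at this
            exact hacyc s this
        · rintro rfl
          exact ⟨[s], ⟨List.cons_ne_nil _ _, List.isChain_singleton s, rfl, rfl⟩, rfl⟩
      show sSup (S s) = 0
      rw [hS]
      exact csSup_singleton 0
    · -- 0 ≤ z v
      intro v
      obtain ⟨l, hl, hlen⟩ := hz_mem v
      rw [← hlen]
      exact lenW_nonneg hwnn l hl.2.1
    · -- z t ≤ M
      refine csSup_le (hSne t) ?_
      rintro x ⟨l, hl, rfl⟩
      exact hM l hl
    · -- constraints
      intro i j hij
      obtain ⟨l, hl, hlen⟩ := hz_mem i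
      have hpath : IsPath r s j (l ++ [j]) := isPath_concat hl hij
      have hmem : LenW w (l ++ [j]) ∈ S j := ⟨l ++ [j], hpath, rfl⟩
      have hle := hz_ub j _ hmem
      rw [lenW_concat l i j hl.2.2.2, hlen] at hle
      rw [← hw_eq i j]
      linarith
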